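/- An L_CSL-formula is derivable in the Hilbert system CSMS if and only if it is valid in every CSL-distance minspace model. -/

import Mathlib

/-- Formulas of the language L_CSL: propositional variables, ⊥, negation,
conjunction, and the comparative similarity connective `cls` (A ⇇ B). -/
inductive CSLForm : Type
  | var : ℕ → CSLForm
  | bot : CSLForm
  | neg : CSLForm → CSLForm
  | and : CSLForm → CSLForm → CSLForm
  | cls : CSLForm → CSLForm → CSLForm

namespace CSLForm

def top : CSLForm := neg bot
def or (A B : CSLForm) : CSLForm := neg (and (neg A) (neg B))
def imp (A B : CSLForm) : CSLForm := or (neg A) B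

end CSLForm

/-- A boolean valuation respecting the classical connectives
(⇇-formulas and variables are treated as atoms). -/
def IsBoolVal (v : CSLForm → Bool) : Prop :=
  v .bot = false ∧ (∀ A, v (.neg A) = !v A) ∧ (∀ A B, v (.and A B) = (v A && v B))

/-- Classical tautologies of L_CSL. -/
def CSLTautology (A : CSLForm) : Prop := ∀ v, IsBoolVal v → v A = true

/-- The Hilbert system CSMS. -/
inductive CSMS : CSLForm → Prop
  | taut {A : CSLForm} : CSLTautology A → CSMS A
  | mp {A B : CSLForm} : CSMS (A.imp B) → CSMS A → CSMS B
  | mon {A B : CSLForm} (C : CSLForm) : CSMS (A.imp B) → CSMS ((A.cls C).imp (B.cls C))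
  | ax1 (A B : CSLForm) : CSMS ((A.cls B).neg.or (B.cls A).neg)
  | ax2 (A B C : CSLForm) : CSMS ((A.cls B).imp ((A.cls C).or (C.cls B)))
  | ax3 (A B : CSLForm) : CSMS ((A.and B.neg).imp (A.cls B))
  | ax4 (A B : CSLForm) : CSMS ((A.cls B).imp B.neg)
  | ax5 (A B C : CSLForm) : CSMS (((A.cls B).and (A.cls C)).imp (A.cls (B.or C)))
  | ax6 (A : CSLForm) : CSMS ((A.cls .bot).imp (((A.cls .bot).neg.cls .bot).neg))

/-- Semantic extension of a formula, given preferential relations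
`pref w x y` (meaning x ≺_w y) and a valuation of propositional variables. -/
def prefEval {W : Type} (pref : W → W → W → Prop) (val : ℕ → Set W) :
    CSLForm → Set W
  | .var i => val i
  | .bot => ∅
  | .neg A => (prefEval pref val A)ᶜ
  | .and A B => prefEval pref val A ∩ prefEval pref val B
  | .cls A B =>
      {w | ∃ x ∈ prefEval pref val A, ∀ y ∈ prefEval pref val B, pref w x y}

/-- A CSL-preferential model. -/
structure CSLPrefModel (W : Type) where
  ne : Nonempty W
  pref : W → W → W → Prop
  modular : ∀ w x y z, pref w x y → pref w z y ∨ pref w x z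
  centered : ∀ w x, x = w ∨ pref w w x
  limit : ∀ w (X : Set W), X.Nonempty → {y ∈ X | ∀ z, pref w z y → z ∉ X}.Nonempty
  val : ℕ → Set W

def CSLPrefModel.eval {W : Type} (M : CSLPrefModel W) : CSLForm → Set W :=
  prefEval M.pref M.val

/-- Distance from a point to a set, in ℝ≥0∞ (so that it is ∞ on the empty set). -/
noncomputable def setDist {W : Type} (d : W → W → ℝ) (w : W) (X : Set W) : ENNReal :=
  ⨅ x ∈ X, ENNReal.ofReal (d w x)

/-- A CSL-distance minspace model. -/
structure CSLMinModel (W : Type) where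
  ne : Nonempty W
  dist : W → W → ℝ
  dist_nonneg : ∀ x y, 0 ≤ dist x y
  dist_eq_zero : ∀ x y, dist x y = 0 ↔ x = y
  min_attained : ∀ (w : W) (X : Set W), X.Nonempty → ∃ x ∈ X, ∀ y ∈ X, dist w x ≤ dist w y
  val : ℕ → Set W

noncomputable def CSLMinModel.eval {W : Type} (M : CSLMinModel W) : CSLForm → Set W
  | .var i => M.val i
  | .bot => ∅
  | .neg A => (M.eval A)ᶜ
  | .and A B => M.eval A ∩ M.eval B
  | .cls A B => {w | setDist M.dist w (M.eval A) < setDist M.dist w (M.eval B)}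

/-- Iterated disjunction of a list of formulas. -/
def bigOr : List CSLForm → CSLForm
  | [] => .bot
  | [A] => A
  | A :: B :: rest => A.or (bigOr (B :: rest))

/-- Iterated conjunction of a list of formulas. -/
def bigAnd : List CSLForm → CSLForm
  | [] => .top
  | [A] => A
  | A :: B :: rest => A.and (bigAnd (B :: rest))

/-- Γ is inconsistent wrt CSMS: there are A₁,…,Aₙ ∈ Γ (n ≥ 1) with ⊢ ¬A₁ ⊔ … ⊔ ¬Aₙ. -/
def Inconsistent (Γ : Set CSLForm) : Prop :=
  ∃ L : List CSLForm, L ≠ [] ∧ (∀ A ∈ L, A ∈ Γ) ∧ CSMS (bigOr (L.map .neg))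

def Consistent (Γ : Set CSLForm) : Prop := ¬ Inconsistent Γ

def MaxConsistent (Γ : Set CSLForm) : Prop :=
  Consistent Γ ∧ ∀ A, A ∉ Γ → Inconsistent (insert A Γ)

/-- w^A = {¬B | (A ⇇ B) ∈ w}. -/
def projSet (w : Set CSLForm) (A : CSLForm) : Set CSLForm :=
  {F | ∃ B, F = CSLForm.neg B ∧ (A.cls B) ∈ w}

/-- R(x,y) iff every A ∈ y satisfies (A ⇇ ⊥) ∈ x. -/
def Rrel (x y : Set CSLForm) : Prop := ∀ A, A ∈ y → (A.cls .bot) ∈ x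

/-- The canonical preferential relation: x ≺_w y iff
∃ B ∈ y such that ∀ A ∈ x, (A ⇇ B) ∈ w. -/
def canonPrec (w x y : Set CSLForm) : Prop :=
  ∃ B, B ∈ y ∧ ∀ A, A ∈ x → (A.cls B) ∈ w

lemma bnot_eq (b : Bool) : ((!b) = true) ↔ ¬ (b = true) := by cases b <;> simp
lemma band_eq (a b : Bool) : ((a && b) = true) ↔ (a = true ∧ b = true) := by cases a <;> cases b <;> simp

set_option maxHeartbeats 1000000

namespace CSLHelff

variable {A B C D X Y Z M M' : CSLForm}

lemma bv_neg {v} (hv : IsBoolVal v) (A : CSLForm) : v (A.neg) = !v A := hv.2.1 A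
lemma bv_imp {v} (hv : IsBoolVal v) (A B : CSLForm) :
    (v (A.imp B) = true) ↔ (v A = true → v B = true) := by
  obtain ⟨hb, hn, ha⟩ := hv
  simp only [CSLForm.imp, CSLForm.or, hn, ha, bnot_eq, band_eq]; tauto
lemma bv_or {v} (hv : IsBoolVal v) (A B : CSLForm) :
    (v (A.or B) = true) ↔ (v A = true ∨ v B = true) := by
  obtain ⟨hb, hn, ha⟩ := hv
  simp only [CSLForm.or, hn, ha, bnot_eq, band_eq]; tauto
lemma bv_and {v} (hv : IsBoolVal v) (A B : CSLForm) :
    (v (A.and B) = true) ↔ (v A = true ∧ v B = true) := by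
  obtain ⟨hb, hn, ha⟩ := hv
  simp only [hn, ha, bnot_eq, band_eq]
lemma bv_negp {v} (hv : IsBoolVal v) (A : CSLForm) :
    (v (A.neg) = true) ↔ ¬ (v A = true) := by
  obtain ⟨hb, hn, ha⟩ := hv; simp only [hn, bnot_eq]

lemma bv_bot {v} (hv : IsBoolVal v) : (v CSLForm.bot = true) ↔ False := by simp [hv.1]

lemma sem1 (h1 : CSMS A) (t : ∀ v, IsBoolVal v → v A = true → v B = true) : CSMS B := by
  refine CSMS.mp (CSMS.taut ?_) h1
  intro v hv; simp only [bv_imp hv, bv_or hv, bv_and hv, bv_negp hv, bv_bot hv]; exact t v hv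

lemma sem2 (h1 : CSMS A) (h2 : CSMS B)
    (t : ∀ v, IsBoolVal v → v A = true → v B = true → v C = true) : CSMS C := by
  refine CSMS.mp (CSMS.mp (CSMS.taut ?_) h1) h2
  intro v hv; simp only [bv_imp hv, bv_or hv, bv_and hv, bv_negp hv, bv_bot hv]; exact t v hv

lemma sem3 {E : CSLForm} (h1 : CSMS A) (h2 : CSMS B) (h3 : CSMS C)
    (t : ∀ v, IsBoolVal v → v A = true → v B = true → v C = true → v E = true) : CSMS E := by
  refine CSMS.mp (CSMS.mp (CSMS.mp (CSMS.taut ?_) h1) h2) h3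
  intro v hv; simp only [bv_imp hv, bv_or hv, bv_and hv, bv_negp hv, bv_bot hv]; exact t v hv

lemma sem4 {E F : CSLForm} (h1 : CSMS A) (h2 : CSMS B) (h3 : CSMS C) (h4 : CSMS E)
    (t : ∀ v, IsBoolVal v → v A = true → v B = true → v C = true → v E = true → v F = true) :
    CSMS F := by
  refine CSMS.mp (CSMS.mp (CSMS.mp (CSMS.mp (CSMS.taut ?_) h1) h2) h3) h4
  intro v hv; simp only [bv_imp hv, bv_or hv, bv_and hv, bv_negp hv, bv_bot hv]; exact t v hv

lemma sem6 {E F G H : CSLForm} (h1 : CSMS A) (h2 : CSMS B) (h3 : CSMS C) (h4 : CSMS E)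
    (h5 : CSMS F) (h6 : CSMS G)
    (t : ∀ v, IsBoolVal v → v A = true → v B = true → v C = true → v E = true →
      v F = true → v G = true → v H = true) : CSMS H := by
  refine CSMS.mp (CSMS.mp (CSMS.mp (CSMS.mp (CSMS.mp (CSMS.mp (CSMS.taut ?_) h1) h2) h3) h4) h5) h6
  intro v hv
  simp only [bv_imp hv, bv_or hv, bv_and hv, bv_negp hv, bv_bot hv]; exact t v hv

/-- L1: irreflexivity -/
lemma irrefl (X : CSLForm) : CSMS (X.cls X).neg := by
  refine sem1 (CSMS.ax1 X X) ?_
  intro v hv; simp only [bv_imp hv, bv_or hv, bv_and hv, bv_negp hv, bv_bot hv]; tauto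

/-- L2 -/
lemma not_bot_cls (X : CSLForm) : CSMS ((CSLForm.bot.cls X).neg) := by
  have h1 : CSMS ((CSLForm.bot.cls X).imp (X.cls X)) := by
    refine CSMS.mon X (CSMS.taut ?_)
    intro v hv; simp only [bv_imp hv, bv_or hv, bv_and hv, bv_negp hv, bv_bot hv]; intro h; exact absurd h (by simp [hv.1])
  refine sem2 h1 (irrefl X) ?_
  intro v hv; simp only [bv_imp hv, bv_or hv, bv_and hv, bv_negp hv, bv_bot hv]; tauto

/-- L3: right antitonicity -/
lemma right_anti (h : CSMS (M.imp M')) (C : CSLForm) : CSMS ((C.cls M').imp (C.cls M)) := by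
  have h1 := CSMS.ax2 C M' M
  have h2 := CSMS.mon M' h
  have h3 := irrefl M'
  refine sem3 h1 h2 h3 ?_
  intro v hv; simp only [bv_imp hv, bv_or hv, bv_and hv, bv_negp hv, bv_bot hv]; tauto

/-- L5 -/
lemma or_cls_right (X Y : CSLForm) : CSMS (((X.or Y).cls Y).imp (X.cls Y)) := by
  have h1 := CSMS.ax2 (X.or Y) Y X
  have h2 := CSMS.ax5 (X.or Y) Y X
  have h3 : CSMS (((X.or Y).cls (Y.or X)).imp ((X.or Y).cls (X.or Y))) := by
    refine right_anti (CSMS.taut ?_) _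
    intro v hv; simp only [bv_imp hv, bv_or hv, bv_and hv, bv_negp hv, bv_bot hv]; tauto
  have h4 := irrefl (X.or Y)
  refine sem4 h1 h2 h3 h4 ?_
  intro v hv
  simp only [bv_imp hv, bv_or hv, bv_and hv, bv_negp hv, bv_bot hv]; tauto

lemma or_cls_right' (X Y : CSLForm) : CSMS (((X.or Y).cls X).imp (Y.cls X)) := by
  have h1 : CSMS (((X.or Y).cls X).imp ((Y.or X).cls X)) := by
    refine CSMS.mon X (CSMS.taut ?_)
    intro v hv; simp only [bv_imp hv, bv_or hv, bv_and hv, bv_negp hv, bv_bot hv]; tauto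
  have h2 := or_cls_right Y X
  refine sem2 h1 h2 ?_
  intro v hv; simp only [bv_imp hv, bv_or hv, bv_and hv, bv_negp hv, bv_bot hv]; tauto

/-- L6: left disjunction splitting -/
lemma cls_or_split (X Y Z : CSLForm) :
    CSMS (((X.or Y).cls Z).imp ((X.cls Z).or (Y.cls Z))) := by
  have h1 := CSMS.ax2 (X.or Y) Z X
  have h2 := or_cls_right' X Y
  have h3 := CSMS.ax2 Y X Z
  have h4 := CSMS.ax2 (X.or Y) Z Y
  have h5 := or_cls_right X Y
  have h6 := CSMS.ax1 X Y
  refine sem6 h1 h2 h3 h4 h5 h6 ?_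
  intro v hv
  simp only [bv_imp hv, bv_or hv, bv_and hv, bv_negp hv, bv_bot hv]
  tauto

/-- L7 -/
lemma cls_to_E (C B : CSLForm) : CSMS ((C.cls B).imp (C.cls .bot)) := by
  have h1 := CSMS.ax2 C B CSLForm.bot
  have h2 := not_bot_cls B
  refine sem2 h1 h2 ?_
  intro v hv; simp only [bv_imp hv, bv_or hv, bv_and hv, bv_negp hv, bv_bot hv]; tauto

/-- L9: T axiom for E -/
lemma impE (A : CSLForm) : CSMS (A.imp (A.cls .bot)) := by
  have h1 := CSMS.ax3 A CSLForm.bot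
  refine sem1 h1 ?_
  intro v hv; simp only [bv_imp hv, bv_or hv, bv_and hv, bv_negp hv, bv_bot hv]
  intro h hA; exact h ⟨hA, by simp [hv.1]⟩

/-- L10: 4-like axiom -/
lemma EE_to_E (A : CSLForm) : CSMS (((A.cls .bot).cls .bot).imp (A.cls .bot)) := by
  set F := A.cls CSLForm.bot with hF
  have h1 : CSMS ((F.cls .bot).imp ((F.neg.cls .bot).neg.cls .bot)) :=
    CSMS.mon _ (CSMS.ax6 A)
  have h2 := CSMS.ax6 F.neg
  have h3 := impE F.neg
  refine sem3 h1 h2 h3 ?_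
  intro v hv
  simp only [bv_imp hv, bv_or hv, bv_and hv, bv_negp hv, bv_bot hv]
  tauto

/-- ax6 contrapositive -/
lemma E_negE (A : CSLForm) : CSMS ((((A.cls .bot).neg).cls .bot).imp ((A.cls .bot).neg)) := by
  have h1 := CSMS.ax6 A
  refine sem1 h1 ?_
  intro v hv; simp only [bv_imp hv, bv_or hv, bv_and hv, bv_negp hv, bv_bot hv]; tauto

end CSLHelff

namespace CSLHelff

variable {W : Type} {w : W} {X Y : Set W} {d : W → W → ℝ}

lemma setDist_empty : setDist d w (∅ : Set W) = ⊤ := by simp [setDist]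

lemma setDist_le {x : W} (hx : x ∈ X) : setDist d w X ≤ ENNReal.ofReal (d w x) :=
  iInf₂_le x hx

lemma setDist_ge {c : ENNReal} (h : ∀ x ∈ X, c ≤ ENNReal.ofReal (d w x)) :
    c ≤ setDist d w X := le_iInf₂ h

lemma setDist_mono (h : X ⊆ Y) : setDist d w Y ≤ setDist d w X :=
  setDist_ge fun x hx => setDist_le (h hx)

lemma setDist_union : setDist d w (X ∪ Y) = min (setDist d w X) (setDist d w Y) := by
  unfold setDist
  rw [iInf_union]

variable (M : CSLMinModel W)

lemma setDist_zero_of_mem (hx : w ∈ X) : setDist M.dist w X = 0 := by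
  refine le_antisymm ?_ (zero_le)
  have := setDist_le (d := M.dist) (w := w) hx
  rwa [(M.dist_eq_zero w w).mpr rfl, ENNReal.ofReal_zero] at this

lemma setDist_lt_top (hX : X.Nonempty) : setDist M.dist w X < ⊤ := by
  obtain ⟨x, hx⟩ := hX
  exact lt_of_le_of_lt (setDist_le hx) ENNReal.ofReal_lt_top

lemma setDist_pos (hw : w ∉ X) : 0 < setDist M.dist w X := by
  rcases X.eq_empty_or_nonempty with rfl | hX
  · simp [setDist_empty]
  · obtain ⟨x₀, hx₀, hmin⟩ := M.min_attained w X hX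
    refine lt_of_lt_of_le ?_ (setDist_ge fun y hy => ENNReal.ofReal_le_ofReal (hmin y hy))
    rw [ENNReal.ofReal_pos]
    rcases lt_or_eq_of_le (M.dist_nonneg w x₀) with h | h
    · exact h
    · exact absurd ((M.dist_eq_zero w x₀).mp h.symm) (by rintro rfl; exact hw hx₀)

lemma nonempty_of_setDist_lt_top (h : setDist M.dist w X < ⊤) : X.Nonempty := by
  rcases X.eq_empty_or_nonempty with rfl | hX
  · rw [setDist_empty] at h; exact absurd h (lt_irrefl _)
  · exact hX

lemma eval_neg (A : CSLForm) : M.eval A.neg = (M.eval A)ᶜ := rfl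
lemma eval_and (A B : CSLForm) : M.eval (A.and B) = M.eval A ∩ M.eval B := rfl
lemma eval_bot : M.eval .bot = ∅ := rfl
lemma eval_cls (A B : CSLForm) :
    M.eval (A.cls B) = {w | setDist M.dist w (M.eval A) < setDist M.dist w (M.eval B)} := rfl

lemma eval_or (A B : CSLForm) : M.eval (A.or B) = M.eval A ∪ M.eval B := by
  show ((M.eval A)ᶜ ∩ (M.eval B)ᶜ)ᶜ = _
  rw [Set.compl_inter, compl_compl, compl_compl]

lemma eval_imp (A B : CSLForm) : M.eval (A.imp B) = (M.eval A)ᶜ ∪ M.eval B := by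
  show M.eval ((A.neg).or B) = _
  rw [eval_or]; rfl

lemma eval_imp_univ {A B : CSLForm} :
    M.eval (A.imp B) = Set.univ ↔ M.eval A ⊆ M.eval B := by
  rw [eval_imp]
  constructor
  · intro h x hx
    have : x ∈ (M.eval A)ᶜ ∪ M.eval B := h ▸ Set.mem_univ x
    rcases this with h' | h'
    · exact absurd hx h'
    · exact h'
  · intro h
    ext x; simp only [Set.mem_union, Set.mem_compl_iff, Set.mem_univ, iff_true]
    by_cases hx : x ∈ M.eval A
    · exact Or.inr (h hx)
    · exact Or.inl hx

theorem soundness {A : CSLForm} (h : CSMS A) :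
    ∀ (W : Type) (M : CSLMinModel W), M.eval A = Set.univ := by
  induction h with
  | @taut A ht =>
    intro W M
    ext w
    simp only [Set.mem_univ, iff_true]
    classical
    set v : CSLForm → Bool := fun F => if w ∈ M.eval F then true else false with hv
    have hbv : IsBoolVal v := by
      refine ⟨?_, ?_, ?_⟩
      · simp [hv, eval_bot]
      · intro A
        by_cases h : w ∈ M.eval A <;> simp [hv, eval_neg, h]
      · intro A B
        by_cases h1 : w ∈ M.eval A <;> by_cases h2 : w ∈ M.eval B <;>
          simp [hv, eval_and, h1, h2]
    have := ht v hbv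
    simp only [hv] at this
    by_contra hw
    rw [if_neg hw] at this
    exact Bool.false_ne_true this
  | @mp A B h1 h2 ih1 ih2 =>
    intro W M
    have hsub := (eval_imp_univ M).mp (ih1 W M)
    rw [ih2 W M] at hsub
    exact Set.eq_univ_of_univ_subset hsub
  | @mon A B C h1 ih =>
    intro W M
    rw [eval_imp_univ]
    intro w hw
    have hsub := (eval_imp_univ M).mp (ih W M)
    simp only [eval_cls, Set.mem_setOf_eq] at hw ⊢
    exact lt_of_le_of_lt (setDist_mono hsub) hw
  | ax1 A B =>
    intro W M
    ext w
    rw [eval_or, eval_neg, eval_neg]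
    simp only [Set.mem_union, Set.mem_compl_iff, eval_cls, Set.mem_setOf_eq, Set.mem_univ,
      iff_true]
    rcases lt_or_ge (setDist M.dist w (M.eval A)) (setDist M.dist w (M.eval B)) with h | h
    · exact Or.inr (not_lt.mpr (le_of_lt h))
    · exact Or.inl (not_lt.mpr h)
  | ax2 A B C =>
    intro W M
    rw [eval_imp_univ]
    intro w hw
    rw [eval_or]
    simp only [eval_cls, Set.mem_setOf_eq, Set.mem_union] at hw ⊢
    rcases lt_or_ge (setDist M.dist w (M.eval A)) (setDist M.dist w (M.eval C)) with h | h
    · exact Or.inl h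
    · exact Or.inr (lt_of_le_of_lt h hw)
  | ax3 A B =>
    intro W M
    rw [eval_imp_univ]
    intro w hw
    rw [eval_and, eval_neg] at hw
    simp only [eval_cls, Set.mem_setOf_eq]
    rw [setDist_zero_of_mem M hw.1]
    exact setDist_pos M hw.2
  | ax4 A B =>
    intro W M
    rw [eval_imp_univ]
    intro w hw
    simp only [eval_cls, Set.mem_setOf_eq] at hw
    rw [eval_neg, Set.mem_compl_iff]
    intro hB
    rw [setDist_zero_of_mem M hB] at hw
    exact absurd hw (by simp)
  | ax5 A B C =>
    intro W M
    rw [eval_imp_univ]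
    intro w hw
    rw [eval_and] at hw
    simp only [eval_cls, Set.mem_setOf_eq, Set.mem_inter_iff] at hw ⊢
    rw [eval_or, setDist_union]
    exact lt_min hw.1 hw.2
  | ax6 A =>
    intro W M
    rw [eval_imp_univ]
    intro w hw
    simp only [eval_cls, Set.mem_setOf_eq, eval_bot, setDist_empty] at hw
    rw [eval_neg, Set.mem_compl_iff]
    simp only [eval_cls, Set.mem_setOf_eq, eval_bot, setDist_empty]
    intro hcon
    have hA : (M.eval A).Nonempty := nonempty_of_setDist_lt_top M hw
    have hS : M.eval ((A.cls .bot).neg) = ∅ := by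
      rw [eval_neg, Set.compl_empty_iff]
      ext u
      simp only [eval_cls, Set.mem_setOf_eq, eval_bot, setDist_empty, Set.mem_univ, iff_true]
      exact setDist_lt_top M hA
    rw [hS, setDist_empty] at hcon
    exact absurd hcon (lt_irrefl _)

lemma no_bot : ¬ CSMS CSLForm.bot := by
  intro h
  have := soundness h PUnit
    { ne := ⟨PUnit.unit⟩
      dist := fun _ _ => 0
      dist_nonneg := fun _ _ => le_refl 0
      dist_eq_zero := fun x y => by simp [Subsingleton.elim x y]
      min_attained := fun w X hX => by
        obtain ⟨x, hx⟩ := hX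
        exact ⟨x, hx, fun y _ => le_refl 0⟩
      val := fun _ => ∅ }
  rw [eval_bot] at this
  exact absurd (this ▸ Set.mem_univ PUnit.unit) (by simp)

end CSLHelff

namespace CSLHelff

variable {A B C : CSLForm} {Γ Δ : Set CSLForm}

lemma bv_top {v} (hv : IsBoolVal v) : v CSLForm.top = true := by
  show v (CSLForm.bot.neg) = true
  rw [hv.2.1, hv.1]; rfl

lemma bv_bigOr {v} (hv : IsBoolVal v) :
    ∀ L : List CSLForm, (v (bigOr L) = true ↔ ∃ B ∈ L, v B = true)
  | [] => by simp [bigOr, hv.1]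
  | [A] => by simp [bigOr]
  | A :: B :: r => by
    have ih := bv_bigOr hv (B :: r)
    rw [show bigOr (A :: B :: r) = A.or (bigOr (B :: r)) from rfl, bv_or hv, ih]
    simp

lemma bv_bigAnd {v} (hv : IsBoolVal v) :
    ∀ L : List CSLForm, (v (bigAnd L) = true ↔ ∀ B ∈ L, v B = true)
  | [] => by simp [bigAnd, bv_top hv]
  | [A] => by simp [bigAnd]
  | A :: B :: r => by
    have ih := bv_bigAnd hv (B :: r)
    rw [show bigAnd (A :: B :: r) = A.and (bigAnd (B :: r)) from rfl, bv_and hv, ih]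
    simp

lemma incon_mono (h : Γ ⊆ Δ) (hi : Inconsistent Γ) : Inconsistent Δ := by
  obtain ⟨L, hne, hmem, hpf⟩ := hi
  exact ⟨L, hne, fun A hA => h (hmem A hA), hpf⟩

open Classical in
/-- From inconsistency of `insert A Γ` extract a list from Γ proving ¬A. -/
lemma key1 (h : Inconsistent (insert A Γ)) :
    ∃ L : List CSLForm, (∀ B ∈ L, B ∈ Γ) ∧ CSMS ((bigAnd L).imp A.neg) := by
  obtain ⟨L, hne, hmem, hpf⟩ := h
  refine ⟨L.filter (fun B => B ≠ A), ?_, ?_⟩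
  · intro B hB
    rw [List.mem_filter] at hB
    have := hmem B hB.1
    rcases this with h' | h'
    · exact absurd h' (by simpa using hB.2)
    · exact h'
  · refine sem1 hpf ?_
    intro v hv hOr
    rw [bv_bigOr hv] at hOr
    obtain ⟨nB, hnB, hvB⟩ := hOr
    rw [List.mem_map] at hnB
    obtain ⟨B, hB, rfl⟩ := hnB
    rw [bv_negp hv] at hvB
    rw [bv_imp hv, bv_bigAnd hv]
    intro hall
    rw [bv_negp hv]
    intro hA
    by_cases hBA : B = A
    · exact hvB (hBA ▸ hA)
    · exact hvB (hall B (by rw [List.mem_filter]; exact ⟨hB, by simpa using hBA⟩))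

lemma key2 {L : List CSLForm} (hL : ∀ B ∈ L, B ∈ Γ) (hA : A ∈ Γ)
    (hpf : CSMS ((bigAnd L).imp A.neg)) : Inconsistent Γ := by
  refine ⟨A :: L, by simp, ?_, ?_⟩
  · intro B hB
    rcases List.mem_cons.mp hB with rfl | hB
    · exact hA
    · exact hL B hB
  · refine sem1 hpf ?_
    intro v hv himp
    rw [bv_imp hv] at himp
    rw [bv_bigOr hv]
    by_cases hall : ∀ B ∈ L, v B = true
    · refine ⟨A.neg, by simp, ?_⟩
      exact himp ((bv_bigAnd hv L).mpr hall)
    · push_neg at hall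
      obtain ⟨B, hB, hvB⟩ := hall
      refine ⟨B.neg, List.mem_map.mpr ⟨B, List.mem_cons_of_mem _ hB, rfl⟩, ?_⟩
      rw [bv_negp hv]; exact hvB

/-- The central derivation workhorse for maximal consistent sets. -/
lemma mcs_derive (hw : MaxConsistent Γ) {L : List CSLForm} (hL : ∀ B ∈ L, B ∈ Γ)
    (hpf : CSMS ((bigAnd L).imp C)) : C ∈ Γ := by
  by_contra hC
  obtain ⟨L₂, hL₂, hpf₂⟩ := key1 (hw.2 C hC)
  by_cases hne : L ++ L₂ = []
  · -- both empty: CSMS C and CSMS ¬C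
    have hLe : L = [] := by cases L <;> simp_all
    have hL2e : L₂ = [] := by cases L <;> cases L₂ <;> simp_all
    subst hLe; subst hL2e
    refine absurd (sem2 hpf hpf₂ ?_) no_bot
    intro v hv h1 h2
    rw [bv_imp hv] at h1 h2
    have hC := h1 (by rw [bv_bigAnd hv]; simp)
    have hnC := h2 (by rw [bv_bigAnd hv]; simp)
    rw [bv_negp hv] at hnC
    exact absurd hC hnC
  · refine absurd (?_ : Inconsistent Γ) hw.1
    refine ⟨L ++ L₂, hne, ?_, ?_⟩
    · intro B hB
      rcases List.mem_append.mp hB with h | h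
      · exact hL B h
      · exact hL₂ B h
    · refine sem2 hpf hpf₂ ?_
      intro v hv h1 h2
      rw [bv_imp hv] at h1 h2
      rw [bv_bigOr hv]
      by_cases hall : ∀ B ∈ L ++ L₂, v B = true
      · have hC := h1 ((bv_bigAnd hv L).mpr fun B hB => hall B (List.mem_append_left _ hB))
        have hnC := h2 ((bv_bigAnd hv L₂).mpr fun B hB => hall B (List.mem_append_right _ hB))
        rw [bv_negp hv] at hnC
        exact absurd hC hnC
      · push_neg at hall
        obtain ⟨B, hB, hvB⟩ := hall
        refine ⟨B.neg, List.mem_map.mpr ⟨B, hB, rfl⟩, ?_⟩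
        rw [bv_negp hv]; exact hvB

end CSLHelff

namespace CSLHelff

def enc : CSLForm → ℕ
  | .var i => Nat.pair 0 i
  | .bot => Nat.pair 1 0
  | .neg A => Nat.pair 2 (enc A)
  | .and A B => Nat.pair 3 (Nat.pair (enc A) (enc B))
  | .cls A B => Nat.pair 4 (Nat.pair (enc A) (enc B))

lemma enc_inj : Function.Injective enc := by
  intro a
  induction a with
  | var i => intro b; cases b <;> simp [enc, Nat.pair_eq_pair]
  | bot => intro b; cases b <;> simp [enc, Nat.pair_eq_pair]
  | neg A ih =>
    intro b; cases b <;> simp [enc, Nat.pair_eq_pair]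
    intro h; exact ih h
  | and A B ihA ihB =>
    intro b; cases b <;> simp [enc, Nat.pair_eq_pair]
    rintro h1 h2; exact ⟨ihA h1, ihB h2⟩
  | cls A B ihA ihB =>
    intro b; cases b <;> simp [enc, Nat.pair_eq_pair]
    rintro h1 h2; exact ⟨ihA h1, ihB h2⟩

instance : Countable CSLForm := ⟨⟨enc, enc_inj⟩⟩
instance : Nonempty CSLForm := ⟨.bot⟩

noncomputable def fenum : ℕ → CSLForm := (exists_surjective_nat CSLForm).choose

lemma fenum_surj : Function.Surjective fenum := (exists_surjective_nat CSLForm).choose_spec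

open Classical in
noncomputable def lchain (Γ : Set CSLForm) : ℕ → Set CSLForm
  | 0 => Γ
  | n + 1 =>
    if Consistent (insert (fenum n) (lchain Γ n)) then insert (fenum n) (lchain Γ n)
    else lchain Γ n

lemma lchain_mono {Γ : Set CSLForm} {m n : ℕ} (h : m ≤ n) : lchain Γ m ⊆ lchain Γ n := by
  induction n with
  | zero => simp_all
  | succ n ih =>
    rcases Nat.lt_or_ge m (n+1) with h' | h'
    · refine subset_trans (ih (Nat.lt_succ_iff.mp h')) ?_
      by_cases hc : Consistent (insert (fenum n) (lchain Γ n)) <;>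
        simp [lchain, hc, Set.subset_insert]
    · have : m = n + 1 := le_antisymm h h'
      subst this; exact subset_rfl

lemma lchain_consistent {Γ : Set CSLForm} (hΓ : Consistent Γ) (n : ℕ) :
    Consistent (lchain Γ n) := by
  induction n with
  | zero => exact hΓ
  | succ n ih =>
    by_cases hc : Consistent (insert (fenum n) (lchain Γ n)) <;> simp [lchain, hc]
    exact ih

lemma lindenbaum {Γ : Set CSLForm} (hΓ : Consistent Γ) :
    ∃ w, Γ ⊆ w ∧ MaxConsistent w := by
  refine ⟨⋃ n, lchain Γ n, fun A hA => Set.mem_iUnion.mpr ⟨0, hA⟩, ?_, ?_⟩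
  · -- consistent
    rintro ⟨L, hne, hmem, hpf⟩
    have hstage : ∀ L' : List CSLForm, (∀ A ∈ L', A ∈ ⋃ n, lchain Γ n) →
        ∃ n, ∀ A ∈ L', A ∈ lchain Γ n := by
      intro L'
      induction L' with
      | nil => intro _; exact ⟨0, by simp⟩
      | cons B t ih =>
        intro h
        obtain ⟨n, hn⟩ := ih fun A hA => h A (List.mem_cons_of_mem _ hA)
        obtain ⟨m, hm⟩ := Set.mem_iUnion.mp (h B (List.mem_cons_self))
        refine ⟨max m n, ?_⟩
        intro A hA
        rcases List.mem_cons.mp hA with rfl | hA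
        · exact lchain_mono (le_max_left _ _) hm
        · exact lchain_mono (le_max_right _ _) (hn A hA)
    obtain ⟨n, hn⟩ := hstage L hmem
    exact lchain_consistent hΓ n ⟨L, hne, hn, hpf⟩
  · -- maximal
    intro A hA
    obtain ⟨n, rfl⟩ := fenum_surj A
    by_cases hc : Consistent (insert (fenum n) (lchain Γ n))
    · exact absurd (Set.mem_iUnion.mpr ⟨n + 1, by simp [lchain, hc]⟩) hA
    · rw [Consistent, not_not] at hc
      exact incon_mono (Set.insert_subset_insert fun B hB => Set.mem_iUnion.mpr ⟨n, hB⟩) hc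

variable {Γ w : Set CSLForm} {A B C : CSLForm}

lemma mem_and_csms_neg_incon (hA : A ∈ Γ) (h : CSMS A.neg) : Inconsistent Γ := by
  refine ⟨[A], by simp, by simpa using hA, ?_⟩
  refine sem1 h ?_
  intro v hv h'
  rw [show bigOr ([A].map CSLForm.neg) = A.neg from rfl]
  exact h'

lemma mcs_mem_of_csms (hw : MaxConsistent w) (h : CSMS A) : A ∈ w := by
  refine mcs_derive hw (L := []) (by simp) ?_
  refine sem1 h ?_
  intro v hv hA
  rw [bv_imp hv]; intro _; exact hA

lemma mcs_imp (hw : MaxConsistent w) (h : CSMS (A.imp B)) (hA : A ∈ w) : B ∈ w := by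
  refine mcs_derive hw (L := [A]) (by simpa using hA) ?_
  refine sem1 h ?_
  intro v hv himp
  rw [bv_imp hv] at himp
  rw [show bigAnd [A] = A from rfl, bv_imp hv]
  exact himp

lemma mcs_neg_iff (hw : MaxConsistent w) : A.neg ∈ w ↔ A ∉ w := by
  constructor
  · intro hn hA
    refine hw.1 ⟨[A, A.neg], by simp, ?_, ?_⟩
    · intro B hB
      rcases List.mem_cons.mp hB with rfl | hB
      · exact hA
      · simp at hB; rw [hB]; exact hn
    · refine CSMS.taut ?_
      intro v hv
      rw [show bigOr ([A, A.neg].map CSLForm.neg) = A.neg.or A.neg.neg from rfl,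
        bv_or hv, bv_negp hv, bv_negp hv, bv_negp hv]
      tauto
  · intro hA
    obtain ⟨L, hL, hpf⟩ := key1 (hw.2 A hA)
    exact mcs_derive hw hL hpf

lemma mcs_and_iff (hw : MaxConsistent w) : A.and B ∈ w ↔ A ∈ w ∧ B ∈ w := by
  constructor
  · intro h
    constructor
    · refine mcs_imp hw (CSMS.taut ?_) h
      intro v hv; rw [bv_imp hv, bv_and hv]; tauto
    · refine mcs_imp hw (CSMS.taut ?_) h
      intro v hv; rw [bv_imp hv, bv_and hv]; tauto
  · rintro ⟨h1, h2⟩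
    refine mcs_derive hw (L := [A, B]) ?_ (CSMS.taut ?_)
    · intro D hD
      rcases List.mem_cons.mp hD with rfl | hD
      · exact h1
      · simp at hD; rw [hD]; exact h2
    · intro v hv
      rw [show bigAnd [A, B] = A.and B from rfl, bv_imp hv]
      exact id

lemma mcs_or_iff (hw : MaxConsistent w) : A.or B ∈ w ↔ A ∈ w ∨ B ∈ w := by
  constructor
  · intro h
    by_cases hA : A ∈ w
    · exact Or.inl hA
    · right
      refine mcs_derive hw (L := [A.or B, A.neg]) ?_ (CSMS.taut ?_)
      · intro D hD
        rcases List.mem_cons.mp hD with rfl | hD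
        · exact h
        · simp at hD; rw [hD]; exact (mcs_neg_iff hw).mpr hA
      · intro v hv
        rw [show bigAnd [A.or B, A.neg] = (A.or B).and A.neg from rfl, bv_imp hv,
          bv_and hv, bv_or hv, bv_negp hv]
        tauto
  · intro h
    rcases h with h | h
    · refine mcs_imp hw (CSMS.taut ?_) h
      intro v hv; rw [bv_imp hv, bv_or hv]; tauto
    · refine mcs_imp hw (CSMS.taut ?_) h
      intro v hv; rw [bv_imp hv, bv_or hv]; tauto

lemma mcs_bot_not_mem (hw : MaxConsistent w) : CSLForm.bot ∉ w := by
  intro h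
  refine hw.1 (mem_and_csms_neg_incon h (CSMS.taut ?_))
  intro v hv; rw [bv_negp hv, bv_bot hv]; exact not_false

lemma mcs_top_mem (hw : MaxConsistent w) : CSLForm.top ∈ w :=
  mcs_mem_of_csms hw (CSMS.taut fun v hv => bv_top hv)

lemma mcs_imp2 (hw : MaxConsistent w) (h : CSMS (A.imp (B.imp C)))
    (hA : A ∈ w) (hB : B ∈ w) : C ∈ w := by
  have h1 : A.imp (B.imp C) ∈ w := mcs_mem_of_csms hw h
  have h2 : B.imp C ∈ w := by
    refine mcs_derive hw (L := [A.imp (B.imp C), A]) ?_ (CSMS.taut ?_)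
    · intro D hD
      rcases List.mem_cons.mp hD with rfl | hD
      · exact h1
      · simp at hD; rw [hD]; exact hA
    · intro v hv
      rw [show bigAnd [A.imp (B.imp C), A] = (A.imp (B.imp C)).and A from rfl, bv_imp hv,
        bv_and hv, bv_imp hv]
      tauto
  refine mcs_derive hw (L := [B.imp C, B]) ?_ (CSMS.taut ?_)
  · intro D hD
    rcases List.mem_cons.mp hD with rfl | hD
    · exact h2
    · simp at hD; rw [hD]; exact hB
  · intro v hv
    rw [show bigAnd [B.imp C, B] = (B.imp C).and B from rfl, bv_imp hv, bv_and hv, bv_imp hv]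
    tauto

end CSLHelff

namespace CSLHelff

variable {A B C X Y : CSLForm}

lemma csms_imp_refl (X : CSLForm) : CSMS (X.imp X) :=
  CSMS.taut fun v hv => by rw [bv_imp hv]; exact id

lemma csms_imp_trans (h1 : CSMS (A.imp B)) (h2 : CSMS (B.imp C)) : CSMS (A.imp C) := by
  refine sem2 h1 h2 ?_
  intro v hv hab hbc
  rw [bv_imp hv] at hab hbc ⊢
  tauto

lemma csms_and_left (X Y : CSLForm) : CSMS ((X.and Y).imp X) :=
  CSMS.taut fun v hv => by rw [bv_imp hv, bv_and hv]; tauto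

lemma csms_and_right (X Y : CSLForm) : CSMS ((X.and Y).imp Y) :=
  CSMS.taut fun v hv => by rw [bv_imp hv, bv_and hv]; tauto

lemma csms_imp_bigAnd : ∀ L : List CSLForm, (∀ C ∈ L, CSMS (X.imp C)) →
    CSMS (X.imp (bigAnd L))
  | [] => fun _ => CSMS.taut fun v hv => by rw [bv_imp hv]; intro _; exact bv_top hv
  | [A] => fun h => h A (by simp)
  | A :: B :: r => fun h => by
    have h1 := h A (by simp)
    have h2 := csms_imp_bigAnd (B :: r) fun C hC => h C (List.mem_cons_of_mem _ hC)
    rw [show bigAnd (A :: B :: r) = A.and (bigAnd (B :: r)) from rfl]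
    refine sem2 h1 h2 ?_
    intro v hv ha hb
    rw [bv_imp hv] at ha hb ⊢
    rw [bv_and hv]
    tauto

lemma pair_incon {Γ : Set CSLForm} (h1 : C ∈ Γ) (h2 : C.neg ∈ Γ) : Inconsistent Γ := by
  refine ⟨[C, C.neg], by simp, ?_, ?_⟩
  · intro B hB
    rcases List.mem_cons.mp hB with rfl | hB
    · exact h1
    · simp at hB; rw [hB]; exact h2
  · refine CSMS.taut ?_
    intro v hv
    rw [show bigOr ([C, C.neg].map CSLForm.neg) = C.neg.or C.neg.neg from rfl,
      bv_or hv, bv_negp hv, bv_negp hv, bv_negp hv]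
    tauto

section Witness

variable (P : CSLForm → Prop) (seedF : CSLForm)

open Classical in
noncomputable def wseq : ℕ → CSLForm
  | 0 => seedF
  | n + 1 =>
    if P ((wseq n).and (fenum n)) then (wseq n).and (fenum n)
    else (wseq n).and (fenum n).neg

variable {P seedF}

lemma wseq_P (hseed : P seedF) (hsplit : ∀ M D, P M → P (M.and D) ∨ P (M.and D.neg)) :
    ∀ n, P (wseq P seedF n)
  | 0 => hseed
  | n + 1 => by
    have ih := wseq_P hseed hsplit n
    by_cases h : P ((wseq P seedF n).and (fenum n))
    · simpa [wseq, h] using h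
    · rcases hsplit (wseq P seedF n) (fenum n) ih with h' | h'
      · exact absurd h' h
      · simpa [wseq, h] using h'

lemma wseq_imp_succ (n : ℕ) : CSMS ((wseq P seedF (n+1)).imp (wseq P seedF n)) := by
  by_cases h : P ((wseq P seedF n).and (fenum n)) <;>
    simp only [wseq, h, if_true, if_false] <;> first
      | exact csms_and_left _ _
      | exact csms_and_left _ _

lemma wseq_imp_le {m n : ℕ} (h : m ≤ n) : CSMS ((wseq P seedF n).imp (wseq P seedF m)) := by
  induction n with
  | zero => obtain rfl : m = 0 := Nat.le_zero.mp h; exact csms_imp_refl _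
  | succ n ih =>
    rcases Nat.lt_or_ge m (n+1) with h' | h'
    · exact csms_imp_trans (wseq_imp_succ n) (ih (Nat.lt_succ_iff.mp h'))
    · have : m = n + 1 := le_antisymm h h'
      subst this; exact csms_imp_refl _

theorem genWitness (hseed : P seedF)
    (hsplit : ∀ M D, P M → P (M.and D) ∨ P (M.and D.neg))
    (hcons : ∀ M, P M → ¬ CSMS M.neg) :
    ∃ y : Set CSLForm, MaxConsistent y ∧ seedF ∈ y ∧
      ∀ C ∈ y, ∃ M, P M ∧ CSMS (M.imp C) := by
  set y : Set CSLForm := {C | ∃ n, CSMS ((wseq P seedF n).imp C)} with hy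
  have hstage : ∀ L : List CSLForm, (∀ B ∈ L, B ∈ y) →
      ∃ n, ∀ B ∈ L, CSMS ((wseq P seedF n).imp B) := by
    intro L
    induction L with
    | nil => intro _; exact ⟨0, by simp⟩
    | cons B t ih =>
      intro h
      obtain ⟨n, hn⟩ := ih fun A hA => h A (List.mem_cons_of_mem _ hA)
      obtain ⟨m, hm⟩ := h B (List.mem_cons_self)
      refine ⟨max m n, ?_⟩
      intro A hA
      rcases List.mem_cons.mp hA with rfl | hA
      · exact csms_imp_trans (wseq_imp_le (le_max_left m n)) hm
      · exact csms_imp_trans (wseq_imp_le (le_max_right m n)) (hn A hA)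
  have hycons : Consistent y := by
    rintro ⟨L, hne, hmem, hpf⟩
    obtain ⟨n, hn⟩ := hstage L hmem
    have h1 : CSMS ((wseq P seedF n).imp (bigAnd L)) := csms_imp_bigAnd L hn
    have h2 : CSMS ((wseq P seedF n).neg) := by
      refine sem2 h1 hpf ?_
      intro v hv ha hb
      rw [bv_imp hv] at ha
      rw [bv_negp hv]
      intro hK
      have hall := (bv_bigAnd hv L).mp (ha hK)
      rw [bv_bigOr hv] at hb
      obtain ⟨nB, hnB, hvB⟩ := hb
      obtain ⟨B, hB, rfl⟩ := List.mem_map.mp hnB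
      rw [bv_negp hv] at hvB
      exact hvB (hall B hB)
    exact hcons _ (wseq_P hseed hsplit n) h2
  refine ⟨y, ⟨hycons, ?_⟩, ⟨0, csms_imp_refl _⟩, ?_⟩
  · intro C hC
    obtain ⟨n, rfl⟩ := fenum_surj C
    by_cases h : P ((wseq P seedF n).and (fenum n))
    · exfalso
      refine hC ⟨n + 1, ?_⟩
      simp only [wseq, h, if_true]
      exact csms_and_right _ _
    · have hneg : (fenum n).neg ∈ y := by
        refine ⟨n + 1, ?_⟩
        simp only [wseq, h, if_false]
        exact csms_and_right _ _
      exact pair_incon (Set.mem_insert _ _) (Set.mem_insert_of_mem _ hneg)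
  · rintro C ⟨n, hn⟩
    exact ⟨wseq P seedF n, wseq_P hseed hsplit n, hn⟩

end Witness

end CSLHelff

namespace CSLHelff

/-- members of the `Rrel`-class of `w₀` -/
def Good (w₀ w : Set CSLForm) : Prop := MaxConsistent w ∧ Rrel w₀ w

variable {w₀ w x y : Set CSLForm} {A B C D : CSLForm}

lemma good_self (hw₀ : MaxConsistent w₀) : Good w₀ w₀ :=
  ⟨hw₀, fun C hC => mcs_imp hw₀ (impE C) hC⟩

lemma fwdE (hw₀ : MaxConsistent w₀) (hG : Good w₀ w) (h : (C.cls .bot) ∈ w) :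
    (C.cls .bot) ∈ w₀ :=
  mcs_imp hw₀ (EE_to_E C) (hG.2 _ h)

lemma bwdE (hw₀ : MaxConsistent w₀) (hG : Good w₀ w) (h : (C.cls .bot) ∈ w₀) :
    (C.cls .bot) ∈ w := by
  by_contra hn
  have h1 : (C.cls .bot).neg ∈ w := (mcs_neg_iff hG.1).mpr hn
  have h2 : (((C.cls .bot).neg).cls .bot) ∈ w₀ := hG.2 _ h1
  have h3 : (C.cls .bot).neg ∈ w₀ := mcs_imp hw₀ (E_negE C) h2
  exact (mcs_neg_iff hw₀).mp h3 h

lemma goodE_of_mem (hw₀ : MaxConsistent w₀) (hG : Good w₀ w) (hG' : Good w₀ x) (h : C ∈ x) :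
    (C.cls .bot) ∈ w :=
  bwdE hw₀ hG (hG'.2 C h)

/-- strict weak order transitivity in an MCS -/
lemma ord_trans (hw : MaxConsistent w) (h1 : (D.cls C) ∈ w) (h2 : (C.cls B) ∈ w) :
    (D.cls B) ∈ w := by
  have hor : ((D.cls B).or (B.cls C)) ∈ w := mcs_imp hw (CSMS.ax2 D C B) h1
  rcases (mcs_or_iff hw).mp hor with h | h
  · exact h
  · exfalso
    have hax := mcs_mem_of_csms hw (CSMS.ax1 C B)
    rcases (mcs_or_iff hw).mp hax with h' | h'
    · exact (mcs_neg_iff hw).mp h' h2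
    · exact (mcs_neg_iff hw).mp h' h

lemma ord_mod (hw : MaxConsistent w) (h1 : (D.cls C) ∈ w) (h2 : (B.cls C) ∉ w) :
    (D.cls B) ∈ w := by
  have hor : ((D.cls B).or (B.cls C)) ∈ w := mcs_imp hw (CSMS.ax2 D C B) h1
  rcases (mcs_or_iff hw).mp hor with h | h
  · exact h
  · exact absurd h h2

lemma not_self_cls (hw : MaxConsistent w) : (C.cls C) ∉ w := by
  intro h
  exact hw.1 (mem_and_csms_neg_incon h (irrefl C))

/-- subformulas -/
def subs : CSLForm → Set CSLForm
  | .var i => {.var i}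
  | .bot => {.bot}
  | .neg A => insert (A.neg) (subs A)
  | .and A B => insert (A.and B) (subs A ∪ subs B)
  | .cls A B => insert (A.cls B) (subs A ∪ subs B)

lemma self_mem_subs (A : CSLForm) : A ∈ subs A := by
  cases A <;> simp [subs]

lemma subs_finite (A : CSLForm) : (subs A).Finite := by
  induction A with
  | var i => exact Set.finite_singleton _
  | bot => exact Set.finite_singleton _
  | neg A ih => exact ih.insert _
  | and A B ihA ihB => exact (ihA.union ihB).insert _
  | cls A B ihA ihB => exact (ihA.union ihB).insert _

lemma subs_trans : ∀ A : CSLForm, ∀ B ∈ subs A, subs B ⊆ subs A := by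
  intro A
  induction A with
  | var i => intro B hB; simp [subs] at hB; subst hB; exact subset_rfl
  | bot => intro B hB; simp [subs] at hB; subst hB; exact subset_rfl
  | neg A ih =>
    intro B hB
    rcases hB with rfl | hB
    · exact subset_rfl
    · exact (ih B hB).trans (Set.subset_insert _ _)
  | and A C ihA ihC =>
    intro B hB
    rcases hB with rfl | hB
    · exact subset_rfl
    · rcases hB with hB | hB
      · exact ((ihA B hB).trans Set.subset_union_left).trans (Set.subset_insert _ _)
      · exact ((ihC B hB).trans Set.subset_union_right).trans (Set.subset_insert _ _)
  | cls A C ihA ihC =>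
    intro B hB
    rcases hB with rfl | hB
    · exact subset_rfl
    · rcases hB with hB | hB
      · exact ((ihA B hB).trans Set.subset_union_left).trans (Set.subset_insert _ _)
      · exact ((ihC B hB).trans Set.subset_union_right).trans (Set.subset_insert _ _)

variable (A₀ : CSLForm)

def Sig : Set CSLForm := subs A₀ ∪ subs CSLForm.top

def Sig2 : Set CSLForm := Sig A₀ ∪ Set.image2 CSLForm.cls (Sig A₀) (Sig A₀)

lemma Sig_finite : (Sig A₀).Finite := (subs_finite A₀).union (subs_finite _)

lemma Sig2_finite : (Sig2 A₀).Finite :=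
  (Sig_finite A₀).union (Set.Finite.image2 _ (Sig_finite A₀) (Sig_finite A₀))

lemma Sig_sub_Sig2 : Sig A₀ ⊆ Sig2 A₀ := Set.subset_union_left

lemma Sig_closed {B : CSLForm} (hB : B ∈ Sig A₀) : subs B ⊆ Sig A₀ := by
  rcases hB with hB | hB
  · exact (subs_trans A₀ B hB).trans Set.subset_union_left
  · exact (subs_trans _ B hB).trans Set.subset_union_right

lemma A0_mem_Sig : A₀ ∈ Sig A₀ := Or.inl (self_mem_subs A₀)

lemma top_mem_Sig : CSLForm.top ∈ Sig A₀ := Or.inr (self_mem_subs _)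

lemma bot_mem_Sig : CSLForm.bot ∈ Sig A₀ := by
  right
  show CSLForm.bot ∈ insert (CSLForm.bot.neg) (subs .bot)
  exact Set.mem_insert_of_mem _ (self_mem_subs _)

lemma cls_mem_Sig2 {A B : CSLForm} (hA : A ∈ Sig A₀) (hB : B ∈ Sig A₀) :
    A.cls B ∈ Sig2 A₀ := Or.inr (Set.mem_image2_of_mem hA hB)

/-- level of a formula in the modular order recorded by a set of formulas -/
noncomputable def lvl (t : Set CSLForm) (C : CSLForm) : ℕ :=
  {D | D ∈ Sig A₀ ∧ (D.cls C) ∈ t}.ncard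

lemma lvl_le_card (t : Set CSLForm) (C : CSLForm) : lvl A₀ t C ≤ (Sig A₀).ncard :=
  Set.ncard_le_ncard (fun D hD => hD.1) (Sig_finite A₀)

lemma lvl_trace {w : Set CSLForm} {C : CSLForm} (hC : C ∈ Sig A₀) :
    lvl A₀ (w ∩ Sig2 A₀) C = lvl A₀ w C := by
  unfold lvl
  congr 1
  ext D
  simp only [Set.mem_setOf_eq, Set.mem_inter_iff]
  exact ⟨fun h => ⟨h.1, h.2.1⟩, fun h => ⟨h.1, h.2, cls_mem_Sig2 A₀ h.1 hC⟩⟩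

lemma lvl_strict_lt {w : Set CSLForm} {C B : CSLForm} (hw : MaxConsistent w)
    (hC : C ∈ Sig A₀) (h : (C.cls B) ∈ w) : lvl A₀ w C < lvl A₀ w B := by
  apply Set.ncard_lt_ncard
  · constructor
    · intro D hD
      exact ⟨hD.1, ord_trans hw hD.2 h⟩
    · intro hsub
      have : C ∈ {D | D ∈ Sig A₀ ∧ (D.cls B) ∈ w} := ⟨hC, h⟩
      have hCC := (hsub this).2
      exact not_self_cls hw hCC
  · exact (Sig_finite A₀).subset fun D hD => hD.1

lemma lvl_le {w : Set CSLForm} {C B : CSLForm} (hw : MaxConsistent w)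
    (h : (B.cls C) ∉ w) : lvl A₀ w C ≤ lvl A₀ w B := by
  apply Set.ncard_le_ncard
  · intro E hE
    exact ⟨hE.1, ord_mod hw hE.2 h⟩
  · exact (Sig_finite A₀).subset fun D hD => hD.1

end CSLHelff

namespace CSLHelff

variable {w₀ w y : Set CSLForm} {A B Cm : CSLForm}

lemma taut_or_split (M D : CSLForm) : CSMS (M.imp ((M.and D).or (M.and D.neg))) :=
  CSMS.taut fun v hv => by
    rw [bv_imp hv, bv_or hv, bv_and hv, bv_and hv, bv_negp hv]; tauto

/-- D1: witness construction for a true `A ⇇ B`. -/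
lemma witness1 (hw₀ : MaxConsistent w₀) (hGw : Good w₀ w) (hAB : (A.cls B) ∈ w) :
    ∃ x, Good w₀ x ∧ A ∈ x ∧ ∀ C ∈ x, (C.cls B) ∈ w := by
  obtain ⟨x, hx, hAx, hprop⟩ :=
    genWitness (P := fun M => (M.cls B) ∈ w) (seedF := A) hAB
      (by
        intro M D hM
        have h1 : (((M.and D).or (M.and D.neg)).cls B) ∈ w :=
          mcs_imp hGw.1 (CSMS.mon B (taut_or_split M D)) hM
        have h2 := mcs_imp hGw.1 (cls_or_split (M.and D) (M.and D.neg) B) h1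
        exact (mcs_or_iff hGw.1).mp h2)
      (by
        intro M hM hneg
        have himp : CSMS (M.imp .bot) := by
          refine sem1 hneg ?_
          intro v hv h
          rw [bv_negp hv] at h
          rw [bv_imp hv]
          intro h'; exact absurd h' h
        have h1 : (CSLForm.bot.cls B) ∈ w := mcs_imp hGw.1 (CSMS.mon B himp) hM
        exact hGw.1.1 (mem_and_csms_neg_incon h1 (not_bot_cls B)))
  have hcls : ∀ C ∈ x, (C.cls B) ∈ w := by
    intro C hC
    obtain ⟨M, hM, hMC⟩ := hprop C hC
    exact mcs_imp hGw.1 (CSMS.mon B hMC) hM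
  refine ⟨x, ⟨hx, ?_⟩, hAx, hcls⟩
  intro C hC
  exact fwdE hw₀ hGw (mcs_imp hGw.1 (cls_to_E C B) (hcls C hC))

/-- D2: witness construction for a false `A ⇇ B`: given `Cm` with `E Cm ∈ w` and
`(Cm ⇇ B) ∉ w`, build `z ∋ B` all whose elements `D` satisfy `(Cm ⇇ D) ∉ w`. -/
lemma witness2 (hw₀ : MaxConsistent w₀) (hGw : Good w₀ w)
    (hECm : (Cm.cls .bot) ∈ w) (hseed : (Cm.cls B) ∉ w) :
    ∃ z, Good w₀ z ∧ B ∈ z ∧ ∀ D ∈ z, (Cm.cls D) ∉ w := by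
  obtain ⟨z, hz, hBz, hprop⟩ :=
    genWitness (P := fun M => (Cm.cls M) ∉ w) (seedF := B) hseed
      (by
        intro M D hM
        by_contra hcon
        push_neg at hcon
        obtain ⟨h1, h2⟩ := hcon
        try rw [not_not] at h1 h2
        have hand : ((Cm.cls (M.and D)).and (Cm.cls (M.and D.neg))) ∈ w :=
          (mcs_and_iff hGw.1).mpr ⟨h1, h2⟩
        have h3 : (Cm.cls ((M.and D).or (M.and D.neg))) ∈ w :=
          mcs_imp hGw.1 (CSMS.ax5 Cm (M.and D) (M.and D.neg)) hand
        have h4 : (Cm.cls M) ∈ w :=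
          mcs_imp hGw.1 (right_anti (taut_or_split M D) Cm) h3
        exact hM h4)
      (by
        intro M hM hneg
        have himp : CSMS (M.imp .bot) := by
          refine sem1 hneg ?_
          intro v hv h
          rw [bv_negp hv] at h
          rw [bv_imp hv]
          intro h'; exact absurd h' h
        exact hM (mcs_imp hGw.1 (right_anti himp Cm) hECm))
  have hncls : ∀ D ∈ z, (Cm.cls D) ∉ w := by
    intro D hD hmem
    obtain ⟨M, hM, hMD⟩ := hprop D hD
    exact hM (mcs_imp hGw.1 (right_anti hMD Cm) hmem)
  refine ⟨z, ⟨hz, ?_⟩, hBz, hncls⟩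
  intro D hD
  have hor : ((Cm.cls D).or (D.cls .bot)) ∈ w :=
    mcs_imp hGw.1 (CSMS.ax2 Cm .bot D) hECm
  rcases (mcs_or_iff hGw.1).mp hor with h | h
  · exact absurd h (hncls D hD)
  · exact fwdE hw₀ hGw h

end CSLHelff

namespace CSLHelff

variable (w₀ : Set CSLForm) (A₀ : CSLForm)

abbrev Pt : Type := {S : Set CSLForm // ∃ w, Good w₀ w ∧ S = w ∩ Sig2 A₀}

noncomputable def mu (t s : Set CSLForm) : ℕ := sSup ((lvl A₀ t) '' (s ∩ Sig A₀))

open Classical in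
noncomputable def nu (t s : Set CSLForm) : ℕ := if s = t then 0 else mu A₀ t s + 1

variable {A₀}

lemma mu_bddAbove (t s : Set CSLForm) : BddAbove ((lvl A₀ t) '' (s ∩ Sig A₀)) := by
  refine ⟨(Sig A₀).ncard, ?_⟩
  rintro n ⟨C, _, rfl⟩
  exact lvl_le_card A₀ t C

lemma le_mu {t s : Set CSLForm} {C : CSLForm} (hC : C ∈ s ∩ Sig A₀) :
    lvl A₀ t C ≤ mu A₀ t s :=
  le_csSup (mu_bddAbove t s) (Set.mem_image_of_mem _ hC)

lemma mu_le {t s : Set CSLForm} {m : ℕ} (h : ∀ C ∈ s ∩ Sig A₀, lvl A₀ t C ≤ m) :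
    mu A₀ t s ≤ m := by
  rcases (s ∩ Sig A₀).eq_empty_or_nonempty with he | hne
  · unfold mu
    rw [he]
    simp
  · exact csSup_le (hne.image _) (by rintro n ⟨C, hC, rfl⟩; exact h C hC)

variable (A₀) in
noncomputable def canonM (hw₀ : MaxConsistent w₀) : CSLMinModel (Pt w₀ A₀) where
  ne := ⟨⟨w₀ ∩ Sig2 A₀, w₀, good_self hw₀, rfl⟩⟩
  dist P Q := (nu A₀ P.1 Q.1 : ℝ)
  dist_nonneg _ _ := Nat.cast_nonneg _
  dist_eq_zero P Q := by
    rw [Nat.cast_eq_zero]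
    unfold nu
    constructor
    · intro h
      by_cases he : Q.1 = P.1
      · exact (Subtype.ext he).symm
      · rw [if_neg he] at h; exact absurd h (by simp)
    · rintro rfl; simp
  min_attained P X hX := by
    classical
    set N : Set ℕ := (fun Q : Pt w₀ A₀ => nu A₀ P.1 Q.1) '' X with hN
    have hNne : N.Nonempty := hX.image _
    have hmem := Nat.sInf_mem hNne
    obtain ⟨Q₀, hQ₀, hQ₀e⟩ := hmem
    refine ⟨Q₀, hQ₀, ?_⟩
    intro y hy
    rw [Nat.cast_le]
    have h2 : nu A₀ P.1 Q₀.1 = sInf N := hQ₀e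
    rw [h2]
    exact Nat.sInf_le (Set.mem_image_of_mem _ hy)
  val i := {P | CSLForm.var i ∈ P.1}

variable {w₀}
variable (hw₀ : MaxConsistent w₀)

lemma inter_Sig2_Sig (s : Set CSLForm) : (s ∩ Sig2 A₀) ∩ Sig A₀ = s ∩ Sig A₀ := by
  ext C
  simp only [Set.mem_inter_iff]
  exact ⟨fun h => ⟨h.1.1, h.2⟩, fun h => ⟨⟨h.1, Sig_sub_Sig2 A₀ h.2⟩, h.2⟩⟩

lemma setDist_canon (P : Pt w₀ A₀) (X : Set (Pt w₀ A₀)) :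
    setDist (canonM w₀ A₀ hw₀).dist P X = ⨅ Q ∈ X, ((nu A₀ P.1 Q.1 : ℕ) : ENNReal) := by
  unfold setDist
  congr 1
  ext Q
  congr 1
  ext _
  exact ENNReal.ofReal_natCast _

/-- Direction 1 -/
lemma dist_lt_of_mem {w : Set CSLForm} {A B : CSLForm} (hGw : Good w₀ w)
    (hA : A ∈ Sig A₀) (hB : B ∈ Sig A₀) (hAB : (A.cls B) ∈ w) :
    setDist (canonM w₀ A₀ hw₀).dist ⟨w ∩ Sig2 A₀, w, hGw, rfl⟩ {Q : Pt w₀ A₀ | A ∈ Q.1}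
      < setDist (canonM w₀ A₀ hw₀).dist ⟨w ∩ Sig2 A₀, w, hGw, rfl⟩ {Q : Pt w₀ A₀ | B ∈ Q.1} := by
  have hwM : MaxConsistent w := hGw.1
  set t : Set CSLForm := w ∩ Sig2 A₀ with ht
  have hBw : B ∉ w := fun h =>
    (mcs_neg_iff hwM).mp (mcs_imp hwM (CSMS.ax4 A B) hAB) h
  obtain ⟨x, hGx, hAx, hxcls⟩ := witness1 hw₀ hGw hAB
  rw [setDist_canon hw₀, setDist_canon hw₀]
  have hup : (⨅ Q ∈ {Q : Pt w₀ A₀ | A ∈ Q.1}, ((nu A₀ t Q.1 : ℕ) : ENNReal))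
      ≤ ((nu A₀ t (x ∩ Sig2 A₀) : ℕ) : ENNReal) := by
    refine iInf₂_le (⟨x ∩ Sig2 A₀, x, hGx, rfl⟩ : Pt w₀ A₀) ?_
    exact ⟨hAx, Sig_sub_Sig2 A₀ hA⟩
  have hnux : nu A₀ t (x ∩ Sig2 A₀) < lvl A₀ w B + 1 := by
    unfold nu
    by_cases he : x ∩ Sig2 A₀ = t
    · rw [if_pos he]; omega
    · rw [if_neg he]
      have hmux : mu A₀ t (x ∩ Sig2 A₀) < lvl A₀ w B := by
        have hne : ((x ∩ Sig2 A₀) ∩ Sig A₀).Nonempty := by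
          rw [inter_Sig2_Sig]
          exact ⟨CSLForm.top, mcs_top_mem hGx.1, top_mem_Sig A₀⟩
        have hmem := Nat.sSup_mem (hne.image _) (mu_bddAbove t _)
        obtain ⟨C, hC, hCe⟩ := hmem
        rw [inter_Sig2_Sig] at hC
        show sSup _ < _
        rw [← hCe, lvl_trace A₀ hC.2]
        exact lvl_strict_lt A₀ hwM hC.2 (hxcls C hC.1)
      omega
  have hlow : ((lvl A₀ w B + 1 : ℕ) : ENNReal)
      ≤ ⨅ Q ∈ {Q : Pt w₀ A₀ | B ∈ Q.1}, ((nu A₀ t Q.1 : ℕ) : ENNReal) := by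
    refine le_iInf₂ ?_
    rintro ⟨S, z, hGz, rfl⟩ hQ
    dsimp only
    have hBz : B ∈ z := hQ.1
    have hne : z ∩ Sig2 A₀ ≠ t := by
      intro h
      have : B ∈ t := h ▸ ⟨hBz, Sig_sub_Sig2 A₀ hB⟩
      exact hBw this.1
    rw [Nat.cast_le]
    unfold nu
    rw [if_neg hne]
    have : lvl A₀ w B ≤ mu A₀ t (z ∩ Sig2 A₀) := by
      rw [← lvl_trace A₀ (w := w) hB]
      refine le_mu ?_
      rw [inter_Sig2_Sig]
      exact ⟨hBz, hB⟩
    omega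
  refine lt_of_le_of_lt hup (lt_of_lt_of_le ?_ hlow)
  exact_mod_cast hnux

/-- Direction 2 -/
lemma dist_le_of_not_mem {w : Set CSLForm} {A B : CSLForm} (hGw : Good w₀ w)
    (hA : A ∈ Sig A₀) (hB : B ∈ Sig A₀) (hAB : (A.cls B) ∉ w) :
    setDist (canonM w₀ A₀ hw₀).dist ⟨w ∩ Sig2 A₀, w, hGw, rfl⟩ {Q : Pt w₀ A₀ | B ∈ Q.1}
      ≤ setDist (canonM w₀ A₀ hw₀).dist ⟨w ∩ Sig2 A₀, w, hGw, rfl⟩ {Q : Pt w₀ A₀ | A ∈ Q.1} := by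
  have hwM : MaxConsistent w := hGw.1
  set t : Set CSLForm := w ∩ Sig2 A₀ with ht
  rw [setDist_canon hw₀, setDist_canon hw₀]
  by_cases hAw : A ∈ w
  · -- then B ∈ w, distance to B is 0
    have hBw : B ∈ w := by
      by_contra hBw
      have h1 : (A.and B.neg) ∈ w :=
        (mcs_and_iff hwM).mpr ⟨hAw, (mcs_neg_iff hwM).mpr hBw⟩
      exact hAB (mcs_imp hwM (CSMS.ax3 A B) h1)
    have : (⨅ Q ∈ {Q : Pt w₀ A₀ | B ∈ Q.1}, ((nu A₀ t Q.1 : ℕ) : ENNReal)) ≤ 0 := by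
      refine le_trans (iInf₂_le (⟨t, w, hGw, rfl⟩ : Pt w₀ A₀) ⟨hBw, Sig_sub_Sig2 A₀ hB⟩) ?_
      unfold nu
      rw [if_pos rfl]
      simp
    exact le_trans this (zero_le)
  · refine le_iInf₂ ?_
    rintro ⟨S, y, hGy, rfl⟩ hQ
    dsimp only
    have hAy : A ∈ y := hQ.1
    -- pick the maximal-level element of y ∩ Sig
    have hyne : (y ∩ Sig A₀).Nonempty := ⟨CSLForm.top, mcs_top_mem hGy.1, top_mem_Sig A₀⟩
    obtain ⟨Cm, hCm, hCmax⟩ :=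
      Set.exists_max_image (y ∩ Sig A₀) (lvl A₀ w) ((Sig_finite A₀).inter_of_right y) hyne
    have hECm : (Cm.cls .bot) ∈ w := goodE_of_mem hw₀ hGw hGy hCm.1
    have hseed : (Cm.cls B) ∉ w := by
      intro h
      have hCmA : (Cm.cls A) ∈ w := ord_mod hwM h hAB
      have := lvl_strict_lt A₀ hwM hCm.2 hCmA
      exact absurd (hCmax A ⟨hAy, hA⟩) (by omega)
    obtain ⟨z, hGz, hBz, hzn⟩ := witness2 hw₀ hGw hECm hseed
    have hterm : (⨅ Q ∈ {Q : Pt w₀ A₀ | B ∈ Q.1}, ((nu A₀ t Q.1 : ℕ) : ENNReal))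
        ≤ ((nu A₀ t (z ∩ Sig2 A₀) : ℕ) : ENNReal) :=
      iInf₂_le (⟨z ∩ Sig2 A₀, z, hGz, rfl⟩ : Pt w₀ A₀) ⟨hBz, Sig_sub_Sig2 A₀ hB⟩
    refine le_trans hterm ?_
    rw [Nat.cast_le]
    have hyt : y ∩ Sig2 A₀ ≠ t := by
      intro h
      have : A ∈ t := h ▸ ⟨hAy, Sig_sub_Sig2 A₀ hA⟩
      exact hAw this.1
    unfold nu
    rw [if_neg hyt]
    by_cases hzt : z ∩ Sig2 A₀ = t
    · rw [if_pos hzt]; omega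
    · rw [if_neg hzt]
      have h1 : mu A₀ t (z ∩ Sig2 A₀) ≤ lvl A₀ w Cm := by
        refine mu_le ?_
        intro C hC
        rw [inter_Sig2_Sig] at hC
        rw [lvl_trace A₀ hC.2]
        exact lvl_le A₀ hwM (hzn C hC.1)
      have h2 : lvl A₀ w Cm ≤ mu A₀ t (y ∩ Sig2 A₀) := by
        rw [← lvl_trace A₀ (w := w) hCm.2]
        refine le_mu ?_
        rw [inter_Sig2_Sig]
        exact hCm
      simp only [← ht] at h1 h2 ⊢
      omega

end CSLHelff

namespace CSLHelff

variable {w₀ : Set CSLForm} {A₀ : CSLForm}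

theorem evalSig (hw₀ : MaxConsistent w₀) : ∀ {C : CSLForm}, C ∈ Sig A₀ →
    (canonM w₀ A₀ hw₀).eval C = {P : Pt w₀ A₀ | C ∈ P.1} := by
  intro C
  induction C with
  | var i => intro _; rfl
  | bot =>
    intro _
    ext P
    rcases P with ⟨S, w, hGw, rfl⟩
    simp only [CSLMinModel.eval, Set.mem_empty_iff_false, Set.mem_setOf_eq, false_iff]
    intro h
    exact mcs_bot_not_mem hGw.1 h.1
  | neg A ih =>
    intro hC
    have hA : A ∈ Sig A₀ :=
      Sig_closed A₀ hC (Set.mem_insert_of_mem _ (self_mem_subs A))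
    have : (canonM w₀ A₀ hw₀).eval A.neg = ((canonM w₀ A₀ hw₀).eval A)ᶜ := rfl
    rw [this, ih hA]
    ext P
    rcases P with ⟨S, w, hGw, rfl⟩
    simp only [Set.mem_compl_iff, Set.mem_setOf_eq, Set.mem_inter_iff]
    constructor
    · intro h
      refine ⟨(mcs_neg_iff hGw.1).mpr fun hAw => h ⟨hAw, Sig_sub_Sig2 A₀ hA⟩,
        Sig_sub_Sig2 A₀ hC⟩
    · rintro ⟨h1, _⟩ ⟨h2, _⟩
      exact (mcs_neg_iff hGw.1).mp h1 h2
  | and A B ihA ihB =>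
    intro hC
    have hA : A ∈ Sig A₀ :=
      Sig_closed A₀ hC (Set.mem_insert_of_mem _ (Or.inl (self_mem_subs A)))
    have hB : B ∈ Sig A₀ :=
      Sig_closed A₀ hC (Set.mem_insert_of_mem _ (Or.inr (self_mem_subs B)))
    have : (canonM w₀ A₀ hw₀).eval (A.and B)
        = (canonM w₀ A₀ hw₀).eval A ∩ (canonM w₀ A₀ hw₀).eval B := rfl
    rw [this, ihA hA, ihB hB]
    ext P
    rcases P with ⟨S, w, hGw, rfl⟩
    simp only [Set.mem_inter_iff, Set.mem_setOf_eq]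
    constructor
    · rintro ⟨⟨h1, _⟩, ⟨h2, _⟩⟩
      exact ⟨(mcs_and_iff hGw.1).mpr ⟨h1, h2⟩, Sig_sub_Sig2 A₀ hC⟩
    · rintro ⟨h, _⟩
      have := (mcs_and_iff hGw.1).mp h
      exact ⟨⟨this.1, Sig_sub_Sig2 A₀ hA⟩, ⟨this.2, Sig_sub_Sig2 A₀ hB⟩⟩
  | cls A B ihA ihB =>
    intro hC
    have hA : A ∈ Sig A₀ :=
      Sig_closed A₀ hC (Set.mem_insert_of_mem _ (Or.inl (self_mem_subs A)))
    have hB : B ∈ Sig A₀ :=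
      Sig_closed A₀ hC (Set.mem_insert_of_mem _ (Or.inr (self_mem_subs B)))
    ext P
    rcases P with ⟨S, w, hGw, rfl⟩
    rw [Set.mem_setOf_eq]
    have hev : (canonM w₀ A₀ hw₀).eval (A.cls B) =
        {P : Pt w₀ A₀ | setDist (canonM w₀ A₀ hw₀).dist P ((canonM w₀ A₀ hw₀).eval A)
          < setDist (canonM w₀ A₀ hw₀).dist P ((canonM w₀ A₀ hw₀).eval B)} := rfl
    rw [hev, Set.mem_setOf_eq, ihA hA, ihB hB]
    constructor
    · intro hlt
      constructor
      · by_contra hAB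
        exact absurd hlt (not_lt.mpr (dist_le_of_not_mem hw₀ hGw hA hB hAB))
      · exact cls_mem_Sig2 A₀ hA hB
    · rintro ⟨hmem, _⟩
      exact dist_lt_of_mem hw₀ hGw hA hB hmem

theorem completeness {A : CSLForm}
    (h : ∀ (W : Type) (M : CSLMinModel W), M.eval A = Set.univ) : CSMS A := by
  by_contra hA
  have hcons : Consistent {A.neg} := by
    rintro ⟨L, hne, hmem, hpf⟩
    refine hA (sem1 hpf ?_)
    intro v hv hOr
    rw [bv_bigOr hv] at hOr
    obtain ⟨nB, hnB, hvB⟩ := hOr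
    obtain ⟨B, hB, rfl⟩ := List.mem_map.mp hnB
    have hBA : B = A.neg := hmem B hB
    subst hBA
    rw [bv_negp hv, bv_negp hv] at hvB
    exact not_not.mp hvB
  obtain ⟨w₀, hsub, hw₀⟩ := lindenbaum hcons
  have hAw : A ∉ w₀ := fun hmem =>
    (mcs_neg_iff hw₀).mp (hsub (Set.mem_singleton _)) hmem
  have hval := h (Pt w₀ A) (canonM w₀ A hw₀)
  rw [evalSig hw₀ (A0_mem_Sig A)] at hval
  have hP : (⟨w₀ ∩ Sig2 A, w₀, good_self hw₀, rfl⟩ : Pt w₀ A)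
      ∈ {P : Pt w₀ A | A ∈ P.1} := hval ▸ Set.mem_univ _
  exact hAw hP.1

end CSLHelff

/-- a formula is derivable in CSMS iff it is valid in every
CSL-distance minspace model. -/
theorem CSMS_iff_minspace_valid (A : CSLForm) :
    CSMS A ↔ ∀ (W : Type) (M : CSLMinModel W), M.eval A = Set.univ :=
  ⟨CSLHelff.soundness, CSLHelff.completeness⟩
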